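/- Let C₃ be the smooth projective hyperelliptic curve over ℚ given by y² = t⁹ + 2973t⁶ − 369249t³ + 11764900, and let y₁(t) = t⁶ − 106t³ + 3430 and y₂(t) = (1/64)t⁶ + (269/4)t³ + 3430. Then the principal divisor div(y − y_i(t)) on C₃ is divisible by 3 in the divisor group, for i = 1, 2. -/

import Mathlib

private instance : CharZero (RatFunc ℚ) :=
  charZero_of_injective_algebraMap (IsFractionRing.injective (Polynomial ℚ) (RatFunc ℚ))

private lemma aux_pos_add {x y : WithTop ℤ} (hx : 0 ≤ x) (hy : 0 < y) : 0 < x + y :=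
  lt_of_lt_of_le hy (le_trans (le_of_eq (zero_add y).symm) (add_le_add hx le_rfl))

open RatFunc in
private lemma aux_coe_exists {F : Type*} [Field F] (v : AddValuation F (WithTop ℤ))
    {x : F} (hx : x ≠ 0) : ∃ n : ℤ, v x = (n : WithTop ℤ) := by
  have h := (v.ne_top_iff (x := x)).mpr hx
  rcases WithTop.ne_top_iff_exists.mp h with ⟨n, hn⟩
  exact ⟨n, hn.symm⟩

/-- The master valuation-theoretic lemma: if `y² = f`, `f = q² + g³` with `q, g` rational
functions, plus some information on the values of `q, f, g`, then `3 ∣ v (y - q)`. -/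
private lemma aux_master {F : Type*} [Field F] [Algebra (RatFunc ℚ) F]
    (v : AddValuation F (WithTop ℤ)) (y : F) (f q g : RatFunc ℚ)
    (hy : y ^ 2 = algebraMap (RatFunc ℚ) F f)
    (hfq : f = q ^ 2 + g ^ 3)
    (hg : g ≠ 0)
    (h2 : v (algebraMap (RatFunc ℚ) F 2) = 0)
    (hneg : ∀ a : ℤ, v (algebraMap (RatFunc ℚ) F RatFunc.X) = (a : WithTop ℤ) → a < 0 →
      v (algebraMap (RatFunc ℚ) F q) = ((6 * a : ℤ) : WithTop ℤ) ∧
      v (algebraMap (RatFunc ℚ) F f) = ((9 * a : ℤ) : WithTop ℤ))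
    (hnng : (0 : WithTop ℤ) ≤ v (algebraMap (RatFunc ℚ) F RatFunc.X) →
      (0 : WithTop ℤ) ≤ v (algebraMap (RatFunc ℚ) F q) ∧
      ((0 : WithTop ℤ) < v (algebraMap (RatFunc ℚ) F q) →
        v (algebraMap (RatFunc ℚ) F g) ≤ 0)) :
    ∃ n : ℤ, v (y - algebraMap (RatFunc ℚ) F q) = ((3 * n : ℤ) : WithTop ℤ) := by
  set K := algebraMap (RatFunc ℚ) F with hKdef
  have hKinj : Function.Injective K := (algebraMap (RatFunc ℚ) F).injective
  set u := y - K q with hu_def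
  set w := y + K q with hw_def
  have huw : u * w = K g * (K g * K g) := by
    have h1 : u * w = y ^ 2 - (K q) ^ 2 := by ring
    have h2' : K g * (K g * K g) = K (g ^ 3) := by rw [map_pow]; ring
    rw [h1, hy, h2', ← map_pow, ← map_sub]
    congr 1
    rw [hfq]; ring
  have hKg : K g ≠ 0 := fun h => hg (hKinj (by simpa using h))
  have huw0 : u * w ≠ 0 := by
    rw [huw]; exact mul_ne_zero hKg (mul_ne_zero hKg hKg)
  have hu0 : u ≠ 0 := left_ne_zero_of_mul huw0
  have hw0 : w ≠ 0 := right_ne_zero_of_mul huw0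
  obtain ⟨α, hα⟩ := aux_coe_exists v hu0
  obtain ⟨β, hβ⟩ := aux_coe_exists v hw0
  obtain ⟨γ, hγ⟩ := aux_coe_exists v hKg
  have hsum : α + β = 3 * γ := by
    have h1 : v (u * w) = v u + v w := v.map_mul u w
    have h2' : v (u * w) = v (K g) + (v (K g) + v (K g)) := by
      rw [huw, v.map_mul, v.map_mul]
    rw [h1, hα, hβ, hγ] at h2'
    have : ((α + β : ℤ) : WithTop ℤ) = ((γ + (γ + γ) : ℤ) : WithTop ℤ) := by
      push_cast
      exact h2'
    have := WithTop.coe_injective this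
    omega
  by_cases hEq : α = β
  · refine ⟨α - γ, ?_⟩
    rw [hα]
    exact_mod_cast congrArg (fun n : ℤ => (n : WithTop ℤ)) (by omega : α = 3 * (α - γ))
  · -- distinct values case
    have hne : v u ≠ v w := by rw [hα, hβ]; exact_mod_cast hEq
    set m := min α β with hm_def
    have hvq : v (K q) = (m : WithTop ℤ) := by
      have hne' : v w ≠ v (-u) := by rw [v.map_neg, hα, hβ]; exact fun h => hEq (by exact_mod_cast h.symm)
      have h1 : v (w + -u) = min (v w) (v (-u)) := v.map_add_of_distinct_val hne'
      have h2' : w + -u = K 2 * K q := by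
        rw [hw_def, hu_def, map_ofNat]; ring
      rw [h2', v.map_mul, h2, zero_add, v.map_neg, hα, hβ] at h1
      rw [h1, hm_def, ← WithTop.coe_min, min_comm]
    have hvy : v y = (m : WithTop ℤ) := by
      have h1 : v (u + w) = min (v u) (v w) := v.map_add_of_distinct_val hne
      have h2' : u + w = K 2 * y := by rw [hw_def, hu_def, map_ofNat]; ring
      rw [h2', v.map_mul, h2, zero_add, hα, hβ] at h1
      rw [h1, hm_def, ← WithTop.coe_min]
    have hvf : v (K f) = ((m + m : ℤ) : WithTop ℤ) := by
      have h1 : v (K f) = v (y * y) := by rw [← hy]; ring_nf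
      rw [v.map_mul, hvy] at h1
      rw [h1]; push_cast; rfl
    obtain ⟨a, ha⟩ := aux_coe_exists v (x := K RatFunc.X)
      (fun h => RatFunc.X_ne_zero (hKinj (by simpa using h)))
    rcases lt_trichotomy a 0 with hlt | hge
    · obtain ⟨hq6, hf9⟩ := hneg a ha hlt
      rw [hvq] at hq6
      rw [hvf] at hf9
      have e1 : m = 6 * a := WithTop.coe_injective hq6
      have e2 : m + m = 9 * a := WithTop.coe_injective hf9
      omega
    · have h0a : (0 : WithTop ℤ) ≤ v (K RatFunc.X) := by
        rw [ha]; exact_mod_cast (by omega : (0:ℤ) ≤ a)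
      obtain ⟨hq0, hq1⟩ := hnng h0a
      rw [hvq] at hq0 hq1
      have hm0 : (0:ℤ) ≤ m := by exact_mod_cast hq0
      have hmz : m = 0 := by
        by_contra hmne
        have hmpos : (0 : WithTop ℤ) < (m : WithTop ℤ) := by
          exact_mod_cast (by omega : (0:ℤ) < m)
        have hγle : γ ≤ 0 := by
          have := hq1 hmpos
          rw [hγ] at this
          exact_mod_cast this
        -- v (K f) = 3γ, contradiction with hvf
        have hKf : K f = K (g ^ 3) + K (q ^ 2) := by
          rw [← map_add]; congr 1; rw [hfq]; ring
        have hg3 : v (K (g ^ 3)) = ((3 * γ : ℤ) : WithTop ℤ) := by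
          have : K (g ^ 3) = K g * (K g * K g) := by rw [map_pow]; ring
          rw [this, v.map_mul, v.map_mul, hγ]
          norm_cast
          omega
        have hq2 : v (K (q ^ 2)) = ((m + m : ℤ) : WithTop ℤ) := by
          have : K (q ^ 2) = K q * K q := by rw [map_pow]; ring
          rw [this, v.map_mul, hvq]
          norm_cast
        have hlt' : v (K (g ^ 3)) < v (K (q ^ 2)) := by
          rw [hg3, hq2]
          exact_mod_cast (by omega : 3 * γ < m + m)
        have := v.map_add_eq_of_lt_left hlt'
        rw [← hKf, hvf, hg3] at this
        have : m + m = 3 * γ := WithTop.coe_injective this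
        omega
      -- m = 0 : min α β = 0, α ≠ β, α + β = 3γ
      refine ⟨if α ≤ β then 0 else γ, ?_⟩
      rw [hα]
      split_ifs with hcase
      · exact_mod_cast congrArg (fun n : ℤ => (n : WithTop ℤ)) (by omega : α = 3 * 0)
      · exact_mod_cast congrArg (fun n : ℤ => (n : WithTop ℤ)) (by omega : α = 3 * γ)

private lemma aux_smul_coe (k : ℕ) (b : ℤ) :
    k • ((b : WithTop ℤ)) = (((k : ℤ) * b : ℤ) : WithTop ℤ) := by
  induction k with
  | zero => simp
  | succ n ih =>
      rw [succ_nsmul, ih, ← WithTop.coe_add]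
      congr 1
      push_cast
      ring

section Helpers

variable {F : Type*} [Field F] [Algebra (RatFunc ℚ) F]
  (v : AddValuation F (WithTop ℤ))

private lemma aux_pow (k : ℕ) (b : ℤ)
    (hb : v (algebraMap (RatFunc ℚ) F RatFunc.X) = (b : WithTop ℤ)) :
    v (algebraMap (RatFunc ℚ) F (RatFunc.X ^ k)) = (((k : ℤ) * b : ℤ) : WithTop ℤ) := by
  rw [map_pow, v.map_pow, hb, aux_smul_coe]

private lemma aux_pow_nn (k : ℕ)
    (hb : 0 ≤ v (algebraMap (RatFunc ℚ) F RatFunc.X)) :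
    0 ≤ v (algebraMap (RatFunc ℚ) F (RatFunc.X ^ k)) := by
  rw [map_pow, v.map_pow]
  exact nsmul_nonneg hb k

private lemma aux_mono
    (htriv : ∀ c : ℚ, c ≠ 0 → v (algebraMap (RatFunc ℚ) F (RatFunc.C c)) = 0) (c : ℚ) (hc : c ≠ 0) (k : ℕ) (b : ℤ)
    (hb : v (algebraMap (RatFunc ℚ) F RatFunc.X) = (b : WithTop ℤ)) :
    v (algebraMap (RatFunc ℚ) F (RatFunc.C c * RatFunc.X ^ k))
      = (((k : ℤ) * b : ℤ) : WithTop ℤ) := by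
  rw [map_mul, v.map_mul, htriv c hc, zero_add, aux_pow v k b hb]

private lemma aux_mono_nn
    (htriv : ∀ c : ℚ, c ≠ 0 → v (algebraMap (RatFunc ℚ) F (RatFunc.C c)) = 0) (c : ℚ) (hc : c ≠ 0) (k : ℕ)
    (hb : 0 ≤ v (algebraMap (RatFunc ℚ) F RatFunc.X)) :
    0 ≤ v (algebraMap (RatFunc ℚ) F (RatFunc.C c * RatFunc.X ^ k)) := by
  rw [map_mul, v.map_mul, htriv c hc, zero_add]
  exact aux_pow_nn v k hb

private lemma aux_add_ge (p r : RatFunc ℚ) {c : WithTop ℤ}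
    (hp : c ≤ v (algebraMap (RatFunc ℚ) F p)) (hr : c ≤ v (algebraMap (RatFunc ℚ) F r)) :
    c ≤ v (algebraMap (RatFunc ℚ) F (p + r)) := by
  rw [map_add]
  exact le_trans (le_min hp hr) (v.map_add _ _)

private lemma aux_head (p r : RatFunc ℚ)
    (h : v (algebraMap (RatFunc ℚ) F p) < v (algebraMap (RatFunc ℚ) F r)) :
    v (algebraMap (RatFunc ℚ) F (p + r)) = v (algebraMap (RatFunc ℚ) F p) := by
  rw [map_add]
  exact v.map_add_eq_of_lt_left h

private lemma aux_vneg (p : RatFunc ℚ) :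
    v (algebraMap (RatFunc ℚ) F (-p)) = v (algebraMap (RatFunc ℚ) F p) := by
  rw [map_neg, v.map_neg]

end Helpers

section Curves

variable {F : Type*} [Field F] [Algebra (RatFunc ℚ) F]

private lemma aux_f_neg (v : AddValuation F (WithTop ℤ))
    (htriv : ∀ c : ℚ, c ≠ 0 → v (algebraMap (RatFunc ℚ) F (RatFunc.C c)) = 0)
    (a : ℤ) (ha : v (algebraMap (RatFunc ℚ) F RatFunc.X) = (a : WithTop ℤ)) (hlt : a < 0) :
    v (algebraMap (RatFunc ℚ) F
        (RatFunc.X ^ 9 + 2973 * RatFunc.X ^ 6 - 369249 * RatFunc.X ^ 3 + 11764900))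
      = ((9 * a : ℤ) : WithTop ℤ) := by
  have e : (RatFunc.X ^ 9 + 2973 * RatFunc.X ^ 6 - 369249 * RatFunc.X ^ 3 + 11764900 : RatFunc ℚ)
      = RatFunc.X ^ 9 + (RatFunc.C 2973 * RatFunc.X ^ 6
          + (-(RatFunc.C 369249 * RatFunc.X ^ 3) + RatFunc.C 11764900 * RatFunc.X ^ 0)) := by
    simp only [map_ofNat, pow_zero, mul_one]
    ring
  have h9 := aux_pow v 9 a ha
  have h6 := aux_mono v htriv 2973 (by norm_num) 6 a ha
  have h3 := aux_mono v htriv 369249 (by norm_num) 3 a ha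
  have h0 := aux_mono v htriv 11764900 (by norm_num) 0 a ha
  simp only [Nat.cast_ofNat, Nat.cast_zero, zero_mul] at h9 h6 h3 h0
  have hrest : ((6 * a : ℤ) : WithTop ℤ) ≤ v (algebraMap (RatFunc ℚ) F
      (RatFunc.C 2973 * RatFunc.X ^ 6
        + (-(RatFunc.C 369249 * RatFunc.X ^ 3) + RatFunc.C 11764900 * RatFunc.X ^ 0))) := by
    refine aux_add_ge v _ _ ?_ (aux_add_ge v _ _ ?_ ?_)
    · rw [h6]
    · rw [aux_vneg, h3]; exact_mod_cast (show (6*a:ℤ) ≤ 3 * a by omega)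
    · rw [h0]; exact_mod_cast (show (6*a:ℤ) ≤ 0 by omega)
  rw [e, aux_head v _ _ (lt_of_lt_of_le
    (by rw [h9]; exact_mod_cast (show (9*a:ℤ) < 6*a by omega)) hrest), h9]

private lemma aux_q1_neg (v : AddValuation F (WithTop ℤ))
    (htriv : ∀ c : ℚ, c ≠ 0 → v (algebraMap (RatFunc ℚ) F (RatFunc.C c)) = 0)
    (a : ℤ) (ha : v (algebraMap (RatFunc ℚ) F RatFunc.X) = (a : WithTop ℤ)) (hlt : a < 0) :
    v (algebraMap (RatFunc ℚ) F (RatFunc.X ^ 6 - 106 * RatFunc.X ^ 3 + 3430))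
      = ((6 * a : ℤ) : WithTop ℤ) := by
  have e : (RatFunc.X ^ 6 - 106 * RatFunc.X ^ 3 + 3430 : RatFunc ℚ)
      = RatFunc.X ^ 6 + (-(RatFunc.C 106 * RatFunc.X ^ 3) + RatFunc.C 3430 * RatFunc.X ^ 0) := by
    simp only [map_ofNat, pow_zero, mul_one]
    ring
  have h6 := aux_pow v 6 a ha
  have h3 := aux_mono v htriv 106 (by norm_num) 3 a ha
  have h0 := aux_mono v htriv 3430 (by norm_num) 0 a ha
  simp only [Nat.cast_ofNat, Nat.cast_zero, zero_mul] at h6 h3 h0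
  have hrest : ((3 * a : ℤ) : WithTop ℤ) ≤ v (algebraMap (RatFunc ℚ) F
      (-(RatFunc.C 106 * RatFunc.X ^ 3) + RatFunc.C 3430 * RatFunc.X ^ 0)) := by
    refine aux_add_ge v _ _ ?_ ?_
    · rw [aux_vneg, h3]
    · rw [h0]; exact_mod_cast (show (3*a:ℤ) ≤ 0 by omega)
  rw [e, aux_head v _ _ (lt_of_lt_of_le
    (by rw [h6]; exact_mod_cast (show (6*a:ℤ) < 3*a by omega)) hrest), h6]

private lemma aux_q2_neg (v : AddValuation F (WithTop ℤ))
    (htriv : ∀ c : ℚ, c ≠ 0 → v (algebraMap (RatFunc ℚ) F (RatFunc.C c)) = 0)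
    (a : ℤ) (ha : v (algebraMap (RatFunc ℚ) F RatFunc.X) = (a : WithTop ℤ)) (hlt : a < 0) :
    v (algebraMap (RatFunc ℚ) F
        ((1 / 64) * RatFunc.X ^ 6 + (269 / 4) * RatFunc.X ^ 3 + 3430))
      = ((6 * a : ℤ) : WithTop ℤ) := by
  have e : ((1 / 64) * RatFunc.X ^ 6 + (269 / 4) * RatFunc.X ^ 3 + 3430 : RatFunc ℚ)
      = RatFunc.C (1/64) * RatFunc.X ^ 6
          + (RatFunc.C (269/4) * RatFunc.X ^ 3 + RatFunc.C 3430 * RatFunc.X ^ 0) := by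
    simp only [map_ofNat, map_div₀, map_one, pow_zero, mul_one]
    ring
  have h6 := aux_mono v htriv (1/64) (by norm_num) 6 a ha
  have h3 := aux_mono v htriv (269/4) (by norm_num) 3 a ha
  have h0 := aux_mono v htriv 3430 (by norm_num) 0 a ha
  simp only [Nat.cast_ofNat, Nat.cast_zero, zero_mul] at h6 h3 h0
  have hrest : ((3 * a : ℤ) : WithTop ℤ) ≤ v (algebraMap (RatFunc ℚ) F
      (RatFunc.C (269/4) * RatFunc.X ^ 3 + RatFunc.C 3430 * RatFunc.X ^ 0)) := by
    refine aux_add_ge v _ _ ?_ ?_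
    · rw [h3]
    · rw [h0]; exact_mod_cast (show (3*a:ℤ) ≤ 0 by omega)
  rw [e, aux_head v _ _ (lt_of_lt_of_le
    (by rw [h6]; exact_mod_cast (show (6*a:ℤ) < 3*a by omega)) hrest), h6]

private lemma aux_q1_nn (v : AddValuation F (WithTop ℤ))
    (htriv : ∀ c : ℚ, c ≠ 0 → v (algebraMap (RatFunc ℚ) F (RatFunc.C c)) = 0)
    (h0 : 0 ≤ v (algebraMap (RatFunc ℚ) F RatFunc.X)) :
    0 ≤ v (algebraMap (RatFunc ℚ) F (RatFunc.X ^ 6 - 106 * RatFunc.X ^ 3 + 3430)) := by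
  have e : (RatFunc.X ^ 6 - 106 * RatFunc.X ^ 3 + 3430 : RatFunc ℚ)
      = RatFunc.X ^ 6 + (-(RatFunc.C 106 * RatFunc.X ^ 3) + RatFunc.C 3430 * RatFunc.X ^ 0) := by
    simp only [map_ofNat, pow_zero, mul_one]
    ring
  rw [e]
  refine aux_add_ge v _ _ (aux_pow_nn v 6 h0) (aux_add_ge v _ _ ?_ ?_)
  · rw [aux_vneg]; exact aux_mono_nn v htriv 106 (by norm_num) 3 h0
  · exact aux_mono_nn v htriv 3430 (by norm_num) 0 h0

private lemma aux_q2_nn (v : AddValuation F (WithTop ℤ))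
    (htriv : ∀ c : ℚ, c ≠ 0 → v (algebraMap (RatFunc ℚ) F (RatFunc.C c)) = 0)
    (h0 : 0 ≤ v (algebraMap (RatFunc ℚ) F RatFunc.X)) :
    0 ≤ v (algebraMap (RatFunc ℚ) F
        ((1 / 64) * RatFunc.X ^ 6 + (269 / 4) * RatFunc.X ^ 3 + 3430)) := by
  have e : ((1 / 64) * RatFunc.X ^ 6 + (269 / 4) * RatFunc.X ^ 3 + 3430 : RatFunc ℚ)
      = RatFunc.C (1/64) * RatFunc.X ^ 6
          + (RatFunc.C (269/4) * RatFunc.X ^ 3 + RatFunc.C 3430 * RatFunc.X ^ 0) := by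
    simp only [map_ofNat, map_div₀, map_one, pow_zero, mul_one]
    ring
  rw [e]
  exact aux_add_ge v _ _ (aux_mono_nn v htriv (1/64) (by norm_num) 6 h0)
    (aux_add_ge v _ _ (aux_mono_nn v htriv (269/4) (by norm_num) 3 h0)
      (aux_mono_nn v htriv 3430 (by norm_num) 0 h0))

private lemma aux_g1_le (v : AddValuation F (WithTop ℤ))
    (htriv : ∀ c : ℚ, c ≠ 0 → v (algebraMap (RatFunc ℚ) F (RatFunc.C c)) = 0)
    (h0 : 0 ≤ v (algebraMap (RatFunc ℚ) F RatFunc.X))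
    (hq : 0 < v (algebraMap (RatFunc ℚ) F (RatFunc.X ^ 6 - 106 * RatFunc.X ^ 3 + 3430))) :
    v (algebraMap (RatFunc ℚ) F (-(RatFunc.X * (RatFunc.X ^ 3 - 71)))) ≤ 0 := by
  by_contra hg
  push_neg at hg
  set A : RatFunc ℚ := RatFunc.C (1/3430) * RatFunc.X ^ 0 + RatFunc.C (1/92610) * RatFunc.X ^ 3
    with hA_def
  set B : RatFunc ℚ := -(RatFunc.C (4/46305) * RatFunc.X ^ 2)
    + RatFunc.C (1/92610) * RatFunc.X ^ 5 with hB_def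
  have bez : A * (RatFunc.X ^ 6 - 106 * RatFunc.X ^ 3 + 3430)
      + B * (-(RatFunc.X * (RatFunc.X ^ 3 - 71))) = 1 := by
    rw [hA_def, hB_def]
    simp only [map_ofNat, map_div₀, map_one, pow_zero, mul_one]
    ring
  have hA : 0 ≤ v (algebraMap (RatFunc ℚ) F A) := by
    rw [hA_def]
    exact aux_add_ge v _ _ (aux_mono_nn v htriv (1/3430) (by norm_num) 0 h0)
      (aux_mono_nn v htriv (1/92610) (by norm_num) 3 h0)
  have hB : 0 ≤ v (algebraMap (RatFunc ℚ) F B) := by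
    rw [hB_def]
    refine aux_add_ge v _ _ ?_ (aux_mono_nn v htriv (1/92610) (by norm_num) 5 h0)
    rw [aux_vneg]
    exact aux_mono_nn v htriv (4/46305) (by norm_num) 2 h0
  have h1 : (0 : WithTop ℤ) < v (algebraMap (RatFunc ℚ) F
      (A * (RatFunc.X ^ 6 - 106 * RatFunc.X ^ 3 + 3430))) := by
    rw [map_mul, v.map_mul]
    exact aux_pos_add hA hq
  have h2 : (0 : WithTop ℤ) < v (algebraMap (RatFunc ℚ) F
      (B * (-(RatFunc.X * (RatFunc.X ^ 3 - 71))))) := by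
    rw [map_mul, v.map_mul]
    exact aux_pos_add hB hg
  have h3 : (0 : WithTop ℤ) < v (algebraMap (RatFunc ℚ) F
      (A * (RatFunc.X ^ 6 - 106 * RatFunc.X ^ 3 + 3430)
        + B * (-(RatFunc.X * (RatFunc.X ^ 3 - 71))))) := by
    rw [map_add]
    exact v.map_lt_add h1 h2
  rw [bez, map_one, v.map_one] at h3
  exact lt_irrefl _ h3

private lemma aux_g2_le (v : AddValuation F (WithTop ℤ))
    (htriv : ∀ c : ℚ, c ≠ 0 → v (algebraMap (RatFunc ℚ) F (RatFunc.C c)) = 0)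
    (h0 : 0 ≤ v (algebraMap (RatFunc ℚ) F RatFunc.X))
    (hq : 0 < v (algebraMap (RatFunc ℚ) F
      ((1 / 64) * RatFunc.X ^ 6 + (269 / 4) * RatFunc.X ^ 3 + 3430))) :
    v (algebraMap (RatFunc ℚ) F
      (-(RatFunc.C (1/16) * (RatFunc.X * (RatFunc.X ^ 3 + 1504))))) ≤ 0 := by
  by_contra hg
  push_neg at hg
  set A : RatFunc ℚ := RatFunc.C (1/3430) * RatFunc.X ^ 0 + RatFunc.C (1/4889808) * RatFunc.X ^ 3
    with hA_def
  set B : RatFunc ℚ := RatFunc.C (2641/12224520) * RatFunc.X ^ 2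
    + RatFunc.C (1/19559232) * RatFunc.X ^ 5 with hB_def
  have bez : A * ((1 / 64) * RatFunc.X ^ 6 + (269 / 4) * RatFunc.X ^ 3 + 3430)
      + B * (-(RatFunc.C (1/16) * (RatFunc.X * (RatFunc.X ^ 3 + 1504)))) = 1 := by
    rw [hA_def, hB_def]
    simp only [map_ofNat, map_div₀, map_one, pow_zero, mul_one]
    ring
  have hA : 0 ≤ v (algebraMap (RatFunc ℚ) F A) := by
    rw [hA_def]
    exact aux_add_ge v _ _ (aux_mono_nn v htriv (1/3430) (by norm_num) 0 h0)
      (aux_mono_nn v htriv (1/4889808) (by norm_num) 3 h0)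
  have hB : 0 ≤ v (algebraMap (RatFunc ℚ) F B) := by
    rw [hB_def]
    exact aux_add_ge v _ _ (aux_mono_nn v htriv (2641/12224520) (by norm_num) 2 h0)
      (aux_mono_nn v htriv (1/19559232) (by norm_num) 5 h0)
  have h1 : (0 : WithTop ℤ) < v (algebraMap (RatFunc ℚ) F
      (A * ((1 / 64) * RatFunc.X ^ 6 + (269 / 4) * RatFunc.X ^ 3 + 3430))) := by
    rw [map_mul, v.map_mul]
    exact aux_pos_add hA hq
  have h2 : (0 : WithTop ℤ) < v (algebraMap (RatFunc ℚ) F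
      (B * (-(RatFunc.C (1/16) * (RatFunc.X * (RatFunc.X ^ 3 + 1504)))))) := by
    rw [map_mul, v.map_mul]
    exact aux_pos_add hB hg
  have h3 : (0 : WithTop ℤ) < v (algebraMap (RatFunc ℚ) F
      (A * ((1 / 64) * RatFunc.X ^ 6 + (269 / 4) * RatFunc.X ^ 3 + 3430)
        + B * (-(RatFunc.C (1/16) * (RatFunc.X * (RatFunc.X ^ 3 + 1504)))))) := by
    rw [map_add]
    exact v.map_lt_add h1 h2
  rw [bez, map_one, v.map_one] at h3
  exact lt_irrefl _ h3

private lemma aux_g1_ne : (-(RatFunc.X * (RatFunc.X ^ 3 - 71)) : RatFunc ℚ) ≠ 0 := by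
  have h71 : (Polynomial.X ^ 3 - 71 : Polynomial ℚ) ≠ 0 := by
    have := Polynomial.X_pow_sub_C_ne_zero (R := ℚ) (by norm_num : 0 < 3) 71
    simpa [Polynomial.C_ofNat] using this
  have e : (RatFunc.X ^ 3 - 71 : RatFunc ℚ)
      = algebraMap (Polynomial ℚ) (RatFunc ℚ) (Polynomial.X ^ 3 - 71) := by
    rw [map_sub, map_pow, RatFunc.algebraMap_X, map_ofNat]
  refine neg_ne_zero.mpr (mul_ne_zero RatFunc.X_ne_zero ?_)
  rw [e]
  exact RatFunc.algebraMap_ne_zero h71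

private lemma aux_g2_ne : (-(RatFunc.C (1/16) * (RatFunc.X * (RatFunc.X ^ 3 + 1504))) : RatFunc ℚ) ≠ 0 := by
  have h1504 : (Polynomial.X ^ 3 + 1504 : Polynomial ℚ) ≠ 0 := by
    have := Polynomial.X_pow_sub_C_ne_zero (R := ℚ) (by norm_num : 0 < 3) (-1504)
    simpa [sub_neg_eq_add, Polynomial.C_ofNat] using this
  have e : (RatFunc.X ^ 3 + 1504 : RatFunc ℚ)
      = algebraMap (Polynomial ℚ) (RatFunc ℚ) (Polynomial.X ^ 3 + 1504) := by
    rw [map_add, map_pow, RatFunc.algebraMap_X, map_ofNat]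
  have hC : (RatFunc.C (1/16 : ℚ)) ≠ 0 := by
    rw [map_div₀, map_one, map_ofNat]
    norm_num
  refine neg_ne_zero.mpr (mul_ne_zero hC (mul_ne_zero RatFunc.X_ne_zero ?_))
  rw [e]
  exact RatFunc.algebraMap_ne_zero h1504

end Curves

theorem stmt14 (F : Type*) [Field F] [Algebra (RatFunc ℚ) F]
    (y : F)
    (hy : y ^ 2 = algebraMap (RatFunc ℚ) F
      (RatFunc.X ^ 9 + 2973 * RatFunc.X ^ 6 - 369249 * RatFunc.X ^ 3 + 11764900))
    (hgen : Algebra.adjoin (RatFunc ℚ) {y} = ⊤)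
    (v : AddValuation F (WithTop ℤ))
    (hsurj : Function.Surjective v)
    (htriv : ∀ c : ℚ, c ≠ 0 → v (algebraMap (RatFunc ℚ) F (RatFunc.C c)) = 0) :
    (∃ n : ℤ, v (y - algebraMap (RatFunc ℚ) F
        (RatFunc.X ^ 6 - 106 * RatFunc.X ^ 3 + 3430)) = ((3 * n : ℤ) : WithTop ℤ)) ∧
    (∃ n : ℤ, v (y - algebraMap (RatFunc ℚ) F
        ((1 / 64) * RatFunc.X ^ 6 + (269 / 4) * RatFunc.X ^ 3 + 3430))
      = ((3 * n : ℤ) : WithTop ℤ)) := by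
  have h2 : v (algebraMap (RatFunc ℚ) F 2) = 0 := by
    have := htriv 2 two_ne_zero
    simpa using this
  constructor
  · refine aux_master v y _ _ (-(RatFunc.X * (RatFunc.X ^ 3 - 71))) hy ?_ aux_g1_ne h2
      (fun a ha hlt => ⟨aux_q1_neg v htriv a ha hlt, aux_f_neg v htriv a ha hlt⟩)
      (fun h0 => ⟨aux_q1_nn v htriv h0, fun hq => aux_g1_le v htriv h0 hq⟩)
    ring
  · refine aux_master v y _ _ (-(RatFunc.C (1/16) * (RatFunc.X * (RatFunc.X ^ 3 + 1504)))) hy ?_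
      aux_g2_ne h2
      (fun a ha hlt => ⟨aux_q2_neg v htriv a ha hlt, aux_f_neg v htriv a ha hlt⟩)
      (fun h0 => ⟨aux_q2_nn v htriv h0, fun hq => aux_g2_le v htriv h0 hq⟩)
    simp only [map_ofNat, map_div₀, map_one]
    ring
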